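/- Under Assumptions A and B, any local minimizer of the problem (P) is a stationary point of (P). -/

import Mathlib

open Set Filter Topology Metric Bornology RealInnerProductSpace
open scoped Classical

noncomputable section

abbrev Euc (n : ℕ) : Type := EuclideanSpace ℝ (Fin n)

/-- Convex subdifferential of a real-valued function on an inner product space. -/
def ConvexSubdiff {H : Type*} [NormedAddCommGroup H] [InnerProductSpace ℝ H]
    (P : H → ℝ) (x : H) : Set H :=
  {ζ | ∀ y, ⟪ζ, y - x⟫ ≤ P y - P x}

/-- Regular (Fréchet) subdifferential of an extended-real-valued function. -/
def RegularSubdiff {H : Type*} [NormedAddCommGroup H] [InnerProductSpace ℝ H]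
    (h : H → EReal) (x : H) : Set H :=
  {ζ | h x ≠ ⊤ ∧ h x ≠ ⊥ ∧ ∀ ε : ℝ, 0 < ε →
    ∀ᶠ z in 𝓝 x,
      (((h x).toReal + ⟪ζ, z - x⟫ - ε * ‖z - x‖ : ℝ) : EReal) ≤ h z}

/-- Limiting (Mordukhovich) subdifferential. -/
def LimSubdiff {H : Type*} [NormedAddCommGroup H] [InnerProductSpace ℝ H]
    (h : H → EReal) (x : H) : Set H :=
  {ζ | ∃ xs ζs : ℕ → H, (∀ k, ζs k ∈ RegularSubdiff h (xs k)) ∧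
    Tendsto xs atTop (𝓝 x) ∧ Tendsto (fun k => h (xs k)) atTop (𝓝 (h x)) ∧
    Tendsto ζs atTop (𝓝 ζ)}

/-- The Kurdyka–Łojasiewicz property with exponent `α` at a point. -/
def KLExpAt {H : Type*} [NormedAddCommGroup H] [InnerProductSpace ℝ H]
    (h : H → EReal) (α : ℝ) (xhat : H) : Prop :=
  ∃ a₀ : ℝ, 0 < a₀ ∧ ∃ a : ℝ, 0 < a ∧ ∃ V ∈ 𝓝 xhat, ∀ x ∈ V,
    h xhat < h x → h x < h xhat + (a : EReal) →
    1 ≤ a₀ * (1 - α) * ((h x).toReal - (h xhat).toReal) ^ (-α) *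
        infDist 0 (LimSubdiff h x)

/-- The general Kurdyka–Łojasiewicz property at a point. -/
def KLAt {H : Type*} [NormedAddCommGroup H] [InnerProductSpace ℝ H]
    (h : H → EReal) (xhat : H) : Prop :=
  ∃ a : ℝ, 0 < a ∧ ∃ V ∈ 𝓝 xhat, ∃ φ φ' : ℝ → ℝ,
    φ 0 = 0 ∧ ContinuousOn φ (Ico 0 a) ∧ ConcaveOn ℝ (Ico 0 a) φ ∧
    (∀ s ∈ Ioo 0 a, HasDerivAt φ (φ' s) s ∧ 0 < φ' s) ∧
    ∀ x ∈ V, h xhat < h x → h x < h xhat + (a : EReal) →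
      1 ≤ φ' ((h x).toReal - (h xhat).toReal) * infDist 0 (LimSubdiff h x)

/-- The extended objective of problem (P). -/
def Fobj {n m : ℕ} (f P1 P2 : Euc n → ℝ) (g : Fin m → Euc n → ℝ) (x : Euc n) : EReal :=
  if ∀ i, g i x ≤ 0 then ((f x + P1 x - P2 x : ℝ) : EReal) else ⊤

/-- The moving balls constraint functions. -/
def barG {n m : ℕ} (g : Fin m → Euc n → ℝ) (g' : Fin m → Euc n → Euc n)
    (x y : Euc n) (w : EuclideanSpace ℝ (Fin m)) (i : Fin m) : ℝ :=
  g i y + ⟪g' i y, x - y⟫ + w i / 2 * ‖x - y‖ ^ 2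

/-- The space `ℝⁿ × ℝⁿ × ℝᵐ` with the (L²) Euclidean inner product. -/
abbrev PS (n m : ℕ) : Type :=
  WithLp 2 (Euc n × WithLp 2 (Euc n × EuclideanSpace ℝ (Fin m)))

/-- The potential function `bar F`. -/
def barF {n m : ℕ} (f P1 P2 : Euc n → ℝ) (g : Fin m → Euc n → ℝ)
    (g' : Fin m → Euc n → Euc n)
    (p : PS n m) : EReal :=
  if ∀ i, barG g g' p.ofLp.1 p.ofLp.2.ofLp.1 p.ofLp.2.ofLp.2 i ≤ 0 then
    ((f p.ofLp.1 + P1 p.ofLp.1 - P2 p.ofLp.1 : ℝ) : EReal) else ⊤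

/-- Stationary points of problem (P). -/
def IsStationaryPt {n m : ℕ} (f P1 P2 : Euc n → ℝ) (f' : Euc n → Euc n)
    (g : Fin m → Euc n → ℝ) (g' : Fin m → Euc n → Euc n) (x : Euc n) : Prop :=
  (∀ i, g i x ≤ 0) ∧ ∃ lam : Fin m → ℝ, (∀ i, 0 ≤ lam i) ∧
    (∀ i, lam i * g i x = 0) ∧
    ∃ u ∈ ConvexSubdiff P1 x, ∃ v ∈ ConvexSubdiff P2 x,
      f' x + u - v + ∑ i, lam i • g' i x = 0

/-- Assumptions A (smoothness, Lipschitz gradients, level-boundedness) and B (MFCQ). -/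
def AssumptionAB {n m : ℕ} (f P1 P2 : Euc n → ℝ) (f' : Euc n → Euc n)
    (g : Fin m → Euc n → ℝ) (g' : Fin m → Euc n → Euc n)
    (Lf : ℝ) (Lg : Fin m → ℝ) : Prop :=
  (∀ x, HasGradientAt f (f' x) x) ∧ LipschitzWith Lf.toNNReal f' ∧
  ConvexOn ℝ univ P1 ∧ Continuous P1 ∧ ConvexOn ℝ univ P2 ∧ Continuous P2 ∧
  (∀ i x, HasGradientAt (g i) (g' i x) x) ∧
  (∀ i, LipschitzWith (Lg i).toNNReal (g' i)) ∧
  {x : Euc n | ∀ i, g i x ≤ 0}.Nonempty ∧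
  (∀ σ : ℝ, IsBounded {x | Fobj f P1 P2 g x ≤ (σ : EReal)}) ∧
  (∀ x : Euc n, (∀ i, g i x ≤ 0) → ∃ d, ∀ i, g i x = 0 → ⟪g' i x, d⟫ < 0)

/-- The sequences generated by the SCP_ls algorithm. -/
structure SCPlsSeq {n m : ℕ} (f P1 P2 : Euc n → ℝ) (f' : Euc n → Euc n)
    (g : Fin m → Euc n → ℝ) (g' : Fin m → Euc n → Euc n)
    (c Llo : ℝ) (x ξ : ℕ → Euc n) (Lfs : ℕ → ℝ)
    (Lgs : ℕ → EuclideanSpace ℝ (Fin m)) : Prop where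
  feas0 : ∀ i, g i (x 0) ≤ 0
  subgrad : ∀ t, ξ t ∈ ConvexSubdiff P2 (x t)
  Lf_lb : ∀ t, Llo ≤ Lfs t
  Lg_lb : ∀ t i, Llo ≤ Lgs t i
  bdd : ∃ M : ℝ, ∀ t, Lfs t ≤ M ∧ ∀ i, Lgs t i ≤ M
  feas_sub : ∀ t i, barG g g' (x (t + 1)) (x t) (Lgs t) i ≤ 0
  min : ∀ t z, (∀ i, barG g g' z (x t) (Lgs t) i ≤ 0) →
    ⟪f' (x t) - ξ t, x (t + 1) - x t⟫ + Lfs t / 2 * ‖x (t + 1) - x t‖ ^ 2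
        + P1 (x (t + 1))
      ≤ ⟪f' (x t) - ξ t, z - x t⟫ + Lfs t / 2 * ‖z - x t‖ ^ 2 + P1 z
  uniq : ∀ t z, (∀ i, barG g g' z (x t) (Lgs t) i ≤ 0) →
    ⟪f' (x t) - ξ t, z - x t⟫ + Lfs t / 2 * ‖z - x t‖ ^ 2 + P1 z
      ≤ ⟪f' (x t) - ξ t, x (t + 1) - x t⟫ + Lfs t / 2 * ‖x (t + 1) - x t‖ ^ 2
        + P1 (x (t + 1)) → z = x (t + 1)
  feas : ∀ t i, g i (x (t + 1)) ≤ 0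
  descent : ∀ t, f (x (t + 1)) + P1 (x (t + 1)) - P2 (x (t + 1)) ≤
    f (x t) + P1 (x t) - P2 (x t) - c / 2 * ‖x (t + 1) - x t‖ ^ 2

/-- Cluster points of a sequence (limits of subsequences). -/
def seqClusterPts {X : Type*} [TopologicalSpace X] (u : ℕ → X) : Set X :=
  {p | ∃ φ : ℕ → ℕ, StrictMono φ ∧ Tendsto (u ∘ φ) atTop (𝓝 p)}

/-- Existence of a subgradient for a continuous convex function on Euclidean space. -/
lemma exists_subgrad {n : ℕ} (P : Euc n → ℝ) (hP : ConvexOn ℝ univ P)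
    (hc : Continuous P) (x : Euc n) : ∃ v : Euc n, ∀ y, ⟪v, y - x⟫ ≤ P y - P x := by
  classical
  set S : Set (Euc n × ℝ) := {p | P p.1 < p.2} with hS
  have hSopen : IsOpen S := isOpen_lt (hc.comp continuous_fst) continuous_snd
  have hSconv : Convex ℝ S := by
    rintro p hp q hq θ₁ θ₂ h1 h2 hsum
    have := hP.2 (mem_univ p.1) (mem_univ q.1) h1 h2 hsum
    have hp' : P p.1 < p.2 := hp
    have hq' : P q.1 < q.2 := hq
    have : P (θ₁ • p.1 + θ₂ • q.1) ≤ θ₁ * P p.1 + θ₂ * P q.1 := by simpa using this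
    have hlt : θ₁ * P p.1 + θ₂ * P q.1 < θ₁ * p.2 + θ₂ * q.2 := by
      rcases eq_or_lt_of_le h1 with h | h
      · have : θ₂ = 1 := by linarith
        subst this
        simp only [← h]
        nlinarith
      · nlinarith [mul_le_mul_of_nonneg_left hq'.le h2]
    calc P ((θ₁ • p + θ₂ • q).1) = P (θ₁ • p.1 + θ₂ • q.1) := rfl
      _ < θ₁ * p.2 + θ₂ * q.2 := lt_of_le_of_lt this hlt
      _ = (θ₁ • p + θ₂ • q).2 := rfl
  have hx0 : (x, P x) ∉ S := by simp [hS]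
  obtain ⟨f, hf⟩ := geometric_hahn_banach_open_point hSconv hSopen hx0
  have hβ : f (0, 1) < 0 := by
    have h1 : ((x, P x + 1) : Euc n × ℝ) ∈ S := by simp [hS]
    have := hf _ h1
    have hsplit : ((x, P x + 1) : Euc n × ℝ) = (x, P x) + (0, 1) := by
      simp [Prod.ext_iff]
    rw [hsplit, map_add] at this
    linarith
  set β := f (0, 1) with hβdef
  have hkey : ∀ y : Euc n, f (y, 0) + P y * β ≤ f (x, 0) + P x * β := by
    intro y
    have h : ∀ ε : ℝ, 0 < ε → f (y, 0) + (P y + ε) * β < f (x, 0) + P x * β := by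
      intro ε hε
      have hmem : ((y, P y + ε) : Euc n × ℝ) ∈ S := by simp [hS, hε]
      have := hf _ hmem
      have hsplit : ((y, P y + ε) : Euc n × ℝ) = (y, 0) + (P y + ε) • (0, 1) := by
        simp [Prod.ext_iff]
      have hsplit2 : ((x, P x) : Euc n × ℝ) = (x, 0) + (P x) • (0, 1) := by
        simp [Prod.ext_iff]
      rw [hsplit, hsplit2, map_add, map_add, map_smul, map_smul] at this
      simpa [smul_eq_mul] using this
    by_contra hcon
    push_neg at hcon
    have hlim : Tendsto (fun ε : ℝ => f (y, 0) + (P y + ε) * β) (𝓝[>] 0)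
        (𝓝 (f (y, 0) + (P y + 0) * β)) := by
      apply Tendsto.mono_left _ nhdsWithin_le_nhds
      exact (tendsto_const_nhds.add (((tendsto_const_nhds.add tendsto_id).mul
        tendsto_const_nhds)))
    have : f (y, 0) + (P y + 0) * β ≤ f (x, 0) + P x * β :=
      le_of_tendsto hlim (eventually_nhdsWithin_of_forall (fun ε hε => (h ε hε).le))
    simp only [add_zero] at this
    linarith
  set ℓ : Euc n →L[ℝ] ℝ := f.comp (ContinuousLinearMap.inl ℝ (Euc n) ℝ) with hℓ
  refine ⟨(InnerProductSpace.toDual ℝ (Euc n)).symm ((-β)⁻¹ • ℓ), fun y => ?_⟩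
  have happ : ∀ z : Euc n, ⟪(InnerProductSpace.toDual ℝ (Euc n)).symm ((-β)⁻¹ • ℓ), z⟫
      = (-β)⁻¹ * ℓ z := by
    intro z
    rw [← InnerProductSpace.toDual_apply_apply]
    simp
  rw [happ]
  have hky := hkey y
  have hβneg : 0 < -β := by linarith
  have hℓy : ℓ (y - x) = f (y, 0) - f (x, 0) := by
    simp [hℓ, Prod.ext_iff, map_sub]
  rw [hℓy]
  have h2 : f (y, 0) - f (x, 0) ≤ (P x - P y) * β := by linarith
  have h3 := mul_le_mul_of_nonneg_left h2 (inv_nonneg.2 hβneg.le)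
  have h4 : (-β)⁻¹ * ((P x - P y) * β) = P y - P x := by
    rw [show (-β)⁻¹ * ((P x - P y) * β) = (P y - P x) * (β * β⁻¹) by ring,
      mul_inv_cancel₀ (ne_of_lt hβ), mul_one]
  linarith

set_option maxHeartbeats 1000000 in
theorem stmt0 {n m : ℕ} (f P1 P2 : Euc n → ℝ) (f' : Euc n → Euc n)
    (g : Fin m → Euc n → ℝ) (g' : Fin m → Euc n → Euc n)
    (Lf : ℝ) (Lg : Fin m → ℝ)
    (hAB : AssumptionAB f P1 P2 f' g g' Lf Lg)
    (xhat : Euc n) (hfeas : ∀ i, g i xhat ≤ 0)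
    (hloc : ∃ U ∈ 𝓝 xhat, ∀ x ∈ U, Fobj f P1 P2 g xhat ≤ Fobj f P1 P2 g x) :
    IsStationaryPt f P1 P2 f' g g' xhat := by
  classical
  obtain ⟨hf, -, hP1conv, hP1cont, hP2conv, hP2cont, hg, -, -, -, hMFCQ⟩ := hAB
  obtain ⟨v, hv⟩ := exists_subgrad P2 hP2conv hP2cont xhat
  obtain ⟨U, hU, hUmin⟩ := hloc
  set c1 : Euc n → ℝ := fun d => ⟪f' xhat - v, d⟫ + P1 (xhat + d) - P1 xhat with hc1def
  -- convexity-type inequality for c1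
  have hc1combo : ∀ (d e : Euc n) (θ₁ θ₂ : ℝ), 0 ≤ θ₁ → 0 ≤ θ₂ → θ₁ + θ₂ = 1 →
      c1 (θ₁ • d + θ₂ • e) ≤ θ₁ * c1 d + θ₂ * c1 e := by
    intro d e θ₁ θ₂ h1 h2 hsum
    have hx : θ₁ • (xhat + d) + θ₂ • (xhat + e) = xhat + (θ₁ • d + θ₂ • e) := by
      have h : θ₁ • xhat + θ₂ • xhat = xhat := by rw [← add_smul, hsum, one_smul]
      calc θ₁ • (xhat + d) + θ₂ • (xhat + e)
          = (θ₁ • xhat + θ₂ • xhat) + (θ₁ • d + θ₂ • e) := by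
            rw [smul_add, smul_add]; abel
        _ = xhat + (θ₁ • d + θ₂ • e) := by rw [h]
    have key := hP1conv.2 (mem_univ (xhat + d)) (mem_univ (xhat + e)) h1 h2 hsum
    rw [hx] at key
    have hinner : ⟪f' xhat - v, θ₁ • d + θ₂ • e⟫
        = θ₁ * ⟪f' xhat - v, d⟫ + θ₂ * ⟪f' xhat - v, e⟫ := by
      rw [inner_add_right, real_inner_smul_right, real_inner_smul_right]
    have hone : θ₁ * P1 xhat + θ₂ * P1 xhat = P1 xhat := by
      rw [← add_mul, hsum, one_mul]
    simp only [hc1def, smul_eq_mul] at *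
    rw [hinner]
    linarith
  have hc1cont : Continuous c1 := by
    apply Continuous.sub
    · exact (continuous_const.inner continuous_id).add
        (hP1cont.comp (continuous_const.add continuous_id))
    · exact continuous_const
  -- P1 segment inequality
  have hP1seg : ∀ (z : Euc n) (t : ℝ), 0 ≤ t → t ≤ 1 →
      P1 (xhat + t • z) - P1 xhat ≤ t * (P1 (xhat + z) - P1 xhat) := by
    intro z t ht0 ht1
    have key := hP1conv.2 (mem_univ (xhat + z)) (mem_univ xhat) ht0
      (by linarith : (0:ℝ) ≤ 1 - t) (by ring)
    have hx : t • (xhat + z) + (1 - t) • xhat = xhat + t • z := by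
      rw [smul_add, sub_smul, one_smul]
      abel
    rw [hx] at key
    simp only [smul_eq_mul] at key
    nlinarith
  -- nonnegativity of c1 on strictly feasible directions
  have hD : ∀ d : Euc n, (∀ i, g i xhat = 0 → ⟪g' i xhat, d⟫ < 0) → 0 ≤ c1 d := by
    intro d hd
    have hline : ∀ t₀ : ℝ, HasDerivAt (fun t : ℝ => xhat + t • d) d t₀ := fun t₀ => by
      simpa using ((hasDerivAt_id t₀).smul_const d).const_add xhat
    have hfd : HasDerivAt (fun t : ℝ => f (xhat + t • d)) ⟪f' xhat, d⟫ 0 := by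
      have h0 : HasFDerivAt f (InnerProductSpace.toDual ℝ (Euc n) (f' xhat))
          (xhat + (0:ℝ) • d) := by
        simpa using (hf xhat).hasFDerivAt
      have h1 := h0.comp_hasDerivAt (0:ℝ) (hline 0)
      simp only [InnerProductSpace.toDual_apply_apply] at h1
      exact h1
    -- eventual feasibility along the ray
    have hfeas_ev : ∀ᶠ t in 𝓝[>] (0:ℝ), ∀ i, g i (xhat + t • d) ≤ 0 := by
      rw [eventually_all]
      intro i
      by_cases hi : g i xhat = 0
      · have hgd : HasDerivAt (fun t : ℝ => g i (xhat + t • d)) ⟪g' i xhat, d⟫ 0 := by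
          have h0 : HasFDerivAt (g i) (InnerProductSpace.toDual ℝ (Euc n) (g' i xhat))
              (xhat + (0:ℝ) • d) := by
            simpa using (hg i xhat).hasFDerivAt
          have h1 := h0.comp_hasDerivAt (0:ℝ) (hline 0)
          simp only [InnerProductSpace.toDual_apply_apply] at h1
          exact h1
        have hs := hasDerivAt_iff_tendsto_slope.1 hgd
        have hev : ∀ᶠ t in 𝓝[≠] (0:ℝ),
            slope (fun t : ℝ => g i (xhat + t • d)) 0 t < 0 :=
          hs (Iio_mem_nhds (hd i hi))
        have hev' : ∀ᶠ t in 𝓝[>] (0:ℝ),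
            slope (fun t : ℝ => g i (xhat + t • d)) 0 t < 0 :=
          hev.filter_mono (nhdsWithin_mono _ (fun x hx => ne_of_gt hx))
        filter_upwards [hev', self_mem_nhdsWithin] with t hst ht
        have ht0 : (0:ℝ) < t := ht
        have hq : (g i (xhat + t • d) - g i xhat) / t < 0 := by
          simpa [slope_def_field, hi] using hst
        have := (div_lt_iff₀ ht0).mp hq
        rw [zero_mul] at this
        linarith
      · have hcont : Tendsto (fun t : ℝ => g i (xhat + t • d)) (𝓝[>] 0) (𝓝 (g i xhat)) := by
          apply Tendsto.mono_left _ nhdsWithin_le_nhds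
          have hgc : Continuous (g i) := continuous_iff_continuousAt.2
            (fun x => ((hg i x).differentiableAt).continuousAt)
          have h2 : Tendsto (fun t : ℝ => g i (xhat + t • d)) (𝓝 0)
              (𝓝 (g i (xhat + (0:ℝ) • d))) :=
            (hgc.comp (continuous_const.add (continuous_id.smul continuous_const))).tendsto 0
          simpa using h2
        have hlt : g i xhat < 0 := lt_of_le_of_ne (hfeas i) hi
        filter_upwards [hcont (Iio_mem_nhds hlt)] with t ht
        exact le_of_lt ht
    have hU_ev : ∀ᶠ t in 𝓝[>] (0:ℝ), xhat + t • d ∈ U := by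
      have hcont : Tendsto (fun t : ℝ => xhat + t • d) (𝓝[>] 0) (𝓝 xhat) := by
        apply Tendsto.mono_left _ nhdsWithin_le_nhds
        have : Tendsto (fun t : ℝ => xhat + t • d) (𝓝 0) (𝓝 (xhat + (0:ℝ) • d)) :=
          (tendsto_const_nhds.add (tendsto_id.smul_const d))
        simpa using this
      exact hcont hU
    have ht1_ev : ∀ᶠ t in 𝓝[>] (0:ℝ), t ≤ 1 :=
      eventually_nhdsWithin_of_eventually_nhds (Filter.Tendsto.eventually_le_const
        (by norm_num : (0:ℝ) < 1) tendsto_id)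
    have hmain : ∀ᶠ t in 𝓝[>] (0:ℝ),
        ⟪v, d⟫ - (P1 (xhat + d) - P1 xhat) ≤ (f (xhat + t • d) - f xhat) / t := by
      filter_upwards [hfeas_ev, hU_ev, ht1_ev, self_mem_nhdsWithin]
        with t hfe hUe ht1 ht0'
      have ht0 : (0:ℝ) < t := ht0'
      have hF := hUmin _ hUe
      rw [Fobj, Fobj, if_pos hfeas, if_pos hfe] at hF
      have hFr : f xhat + P1 xhat - P2 xhat
          ≤ f (xhat + t • d) + P1 (xhat + t • d) - P2 (xhat + t • d) := by
        exact_mod_cast hF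
      have hP2i : t * ⟪v, d⟫ ≤ P2 (xhat + t • d) - P2 xhat := by
        have := hv (xhat + t • d)
        rw [add_sub_cancel_left, real_inner_smul_right] at this
        linarith
      have hP1i := hP1seg d t ht0.le ht1
      rw [le_div_iff₀ ht0]
      nlinarith
    have hslope : Tendsto (fun t : ℝ => (f (xhat + t • d) - f xhat) / t)
        (𝓝[>] 0) (𝓝 ⟪f' xhat, d⟫) := by
      have hs := hasDerivAt_iff_tendsto_slope.1 hfd
      have hs' : Tendsto (slope (fun t : ℝ => f (xhat + t • d)) 0) (𝓝[>] 0)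
          (𝓝 ⟪f' xhat, d⟫) :=
        hs.mono_left (nhdsWithin_mono _ (fun x hx => ne_of_gt hx))
      apply hs'.congr
      intro t
      simp [slope_def_field]
    have hfin : ⟪v, d⟫ - (P1 (xhat + d) - P1 xhat) ≤ ⟪f' xhat, d⟫ :=
      ge_of_tendsto hslope hmain
    have : ⟪f' xhat - v, d⟫ = ⟪f' xhat, d⟫ - ⟪v, d⟫ := inner_sub_left _ _ _
    simp only [hc1def]
    linarith
  obtain ⟨d0, hd0⟩ := hMFCQ xhat hfeas
  -- nonnegativity of c1 on the closed cone of feasible directions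
  have hK : ∀ d : Euc n, (∀ i, g i xhat = 0 → ⟪g' i xhat, d⟫ ≤ 0) → 0 ≤ c1 d := by
    intro d hdle
    have hεpos : ∀ ε : ℝ, 0 < ε → 0 ≤ c1 (d + ε • d0) := by
      intro ε hε
      apply hD
      intro i hi
      rw [inner_add_right, real_inner_smul_right]
      nlinarith [hdle i hi, hd0 i hi]
    have hlim : Tendsto (fun ε : ℝ => c1 (d + ε • d0)) (𝓝[>] 0) (𝓝 (c1 d)) := by
      apply Tendsto.mono_left _ nhdsWithin_le_nhds
      have : Tendsto (fun ε : ℝ => d + ε • d0) (𝓝 0) (𝓝 (d + (0:ℝ) • d0)) :=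
        tendsto_const_nhds.add (tendsto_id.smul_const d0)
      have h2 := (hc1cont.tendsto _).comp this
      simp only [zero_smul, add_zero] at h2
      exact h2
    exact ge_of_tendsto hlim
      (eventually_nhdsWithin_of_forall (fun ε hε => hεpos ε hε))
  -- separation argument to produce multipliers
  set S : Set ((Fin m → ℝ) × ℝ) :=
    {p | ∃ d : Euc n, (∀ i, g i xhat = 0 → ⟪g' i xhat, d⟫ ≤ p.1 i) ∧ c1 d ≤ p.2} with hSdef
  set T : Set ((Fin m → ℝ) × ℝ) := {p | (∀ i, p.1 i < 0) ∧ p.2 < 0} with hTdef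
  have hTopen : IsOpen T := by
    have : T = (⋂ i, {p : (Fin m → ℝ) × ℝ | p.1 i < 0}) ∩ {p | p.2 < 0} := by
      ext p; simp [hTdef]
    rw [this]
    exact (isOpen_iInter_of_finite fun i =>
      isOpen_lt ((continuous_apply i).comp continuous_fst) continuous_const).inter
      (isOpen_lt continuous_snd continuous_const)
  have hnegcombo : ∀ (θ₁ θ₂ x' y' : ℝ), 0 ≤ θ₁ → 0 ≤ θ₂ → θ₁ + θ₂ = 1 →
      x' < 0 → y' < 0 → θ₁ * x' + θ₂ * y' < 0 := by
    intro θ₁ θ₂ x' y' h1 h2 hsum hx hy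
    rcases eq_or_lt_of_le h1 with h | h
    · rw [← h]; simp only [zero_mul, zero_add]
      have : θ₂ = 1 := by linarith
      rw [this, one_mul]; exact hy
    · nlinarith [mul_nonpos_of_nonneg_of_nonpos h2 hy.le]
  have hTconv : Convex ℝ T := by
    rintro p ⟨hp1, hp2⟩ q ⟨hq1, hq2⟩ θ₁ θ₂ h1 h2 hsum
    constructor
    · intro i
      show θ₁ * p.1 i + θ₂ * q.1 i < 0
      exact hnegcombo _ _ _ _ h1 h2 hsum (hp1 i) (hq1 i)
    · show θ₁ * p.2 + θ₂ * q.2 < 0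
      exact hnegcombo _ _ _ _ h1 h2 hsum hp2 hq2
  have hSconv : Convex ℝ S := by
    rintro p ⟨dp, hdp1, hdp2⟩ q ⟨dq, hdq1, hdq2⟩ θ₁ θ₂ h1 h2 hsum
    refine ⟨θ₁ • dp + θ₂ • dq, fun i hi => ?_, ?_⟩
    · rw [inner_add_right, real_inner_smul_right, real_inner_smul_right]
      show _ ≤ θ₁ * p.1 i + θ₂ * q.1 i
      exact add_le_add (mul_le_mul_of_nonneg_left (hdp1 i hi) h1)
        (mul_le_mul_of_nonneg_left (hdq1 i hi) h2)
    · show c1 (θ₁ • dp + θ₂ • dq) ≤ θ₁ * p.2 + θ₂ * q.2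
      calc c1 (θ₁ • dp + θ₂ • dq) ≤ θ₁ * c1 dp + θ₂ * c1 dq :=
            hc1combo dp dq θ₁ θ₂ h1 h2 hsum
        _ ≤ θ₁ * p.2 + θ₂ * q.2 :=
            add_le_add (mul_le_mul_of_nonneg_left hdp2 h1)
              (mul_le_mul_of_nonneg_left hdq2 h2)
  have hdisj : Disjoint T S := by
    rw [Set.disjoint_left]
    rintro p ⟨hp1, hp2⟩ ⟨d, hd1, hd2⟩
    have := hK d (fun i hi => (hd1 i hi).trans (hp1 i).le)
    linarith
  obtain ⟨φf, u, hφT, hφS⟩ := geometric_hahn_banach_open hTconv hTopen hSconv hdisj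
  set μ : Fin m → ℝ := fun i => φf (Pi.single i 1, 0) with hμdef
  set μ0 : ℝ := φf (0, 1) with hμ0def
  have hexp : ∀ (s : Fin m → ℝ) (r : ℝ), φf (s, r) = (∑ i, s i * μ i) + r * μ0 := by
    intro s r
    have h1 : ((s, r) : (Fin m → ℝ) × ℝ)
        = (∑ i, s i • ((Pi.single i 1 : Fin m → ℝ), (0:ℝ))) + r • ((0 : Fin m → ℝ), (1:ℝ)) := by
      rw [Prod.ext_iff]
      constructor
      · show s = (∑ i, s i • ((Pi.single i 1 : Fin m → ℝ), (0:ℝ))).1 + r • (0 : Fin m → ℝ)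
        rw [Prod.fst_sum, smul_zero, add_zero]
        simp only [Prod.smul_fst]
        have : ∀ i, s i • (Pi.single i 1 : Fin m → ℝ) = Pi.single i (s i) := by
          intro i
          rw [← Pi.single_smul, smul_eq_mul, mul_one]
        simp_rw [this]
        exact (Finset.univ_sum_single s).symm
      · show r = (∑ i, s i • ((Pi.single i 1 : Fin m → ℝ), (0:ℝ))).2 + r • (1:ℝ)
        rw [Prod.snd_sum]
        simp
    rw [h1, map_add, map_sum, map_smul, smul_eq_mul]
    congr 1
    apply Finset.sum_congr rfl
    intro i _
    rw [map_smul, smul_eq_mul]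
  have hstar : ∀ d : Euc n, u ≤ (∑ i, ⟪g' i xhat, d⟫ * μ i) + c1 d * μ0 := by
    intro d
    have hmem : ((fun i => ⟪g' i xhat, d⟫), c1 d) ∈ S := ⟨d, fun i _ => le_rfl, le_rfl⟩
    have := hφS _ hmem
    rwa [hexp] at this
  have hTlt : ∀ (s : Fin m → ℝ) (r : ℝ), (∀ i, s i < 0) → r < 0 →
      (∑ i, s i * μ i) + r * μ0 < u := by
    intro s r hs hr
    have := hφT (s, r) ⟨hs, hr⟩
    rwa [hexp] at this
  have hu0 : 0 ≤ u := by
    have hev : ∀ ε : ℝ, 0 < ε → -ε * ((∑ i, μ i) + μ0) < u := by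
      intro ε hε
      have := hTlt (fun _ => -ε) (-ε) (fun _ => by show -ε < 0; linarith) (by linarith)
      calc -ε * ((∑ i, μ i) + μ0) = (∑ i, -ε * μ i) + -ε * μ0 := by
            rw [mul_add, Finset.mul_sum]
        _ < u := this
    have hlim : Tendsto (fun ε : ℝ => -ε * ((∑ i, μ i) + μ0)) (𝓝[>] 0) (𝓝 0) := by
      apply Tendsto.mono_left _ nhdsWithin_le_nhds
      have : Tendsto (fun ε : ℝ => -ε * ((∑ i, μ i) + μ0)) (𝓝 0)
          (𝓝 (-(0:ℝ) * ((∑ i, μ i) + μ0))) := (tendsto_id.neg.mul_const _)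
      simpa using this
    exact le_of_tendsto hlim
      (eventually_nhdsWithin_of_forall (fun ε hε => (hev ε hε).le))
  have hμnn : ∀ j, 0 ≤ μ j := by
    intro j
    by_contra hneg
    push_neg at hneg
    have hsum : ∀ M : ℝ, (∑ i, (if i = j then -M else -1) * μ i)
        = M * (-μ j) + ∑ i ∈ Finset.univ.erase j, -μ i := by
      intro M
      rw [← Finset.sum_erase_add _ _ (Finset.mem_univ j), if_pos rfl]
      rw [add_comm]
      congr 1
      · ring
      · apply Finset.sum_congr rfl
        intro i hi
        rw [if_neg (Finset.ne_of_mem_erase hi)]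
        ring
    have htt : Tendsto (fun M : ℝ => (∑ i, (if i = j then -M else -1) * μ i) + (-1) * μ0)
        atTop atTop := by
      simp_rw [hsum]
      apply tendsto_atTop_add_const_right
      apply tendsto_atTop_add_const_right
      exact Tendsto.atTop_mul_const (by linarith) tendsto_id
    obtain ⟨M, hM1, hM2⟩ := ((htt.eventually_gt_atTop u).and (eventually_gt_atTop 0)).exists
    have := hTlt (fun i => if i = j then -M else -1) (-1)
      (fun i => by show (if i = j then -M else -1) < 0; split <;> linarith) (by norm_num)
    linarith
  have hμ0nn : 0 ≤ μ0 := by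
    by_contra hneg
    push_neg at hneg
    have htt : Tendsto (fun M : ℝ => (∑ i, (-1) * μ i) + (-M) * μ0) atTop atTop := by
      apply tendsto_atTop_add_const_left
      have : (fun M : ℝ => (-M) * μ0) = fun M : ℝ => M * (-μ0) := by
        funext M; ring
      rw [this]
      exact Tendsto.atTop_mul_const (by linarith) tendsto_id
    obtain ⟨M, hM1, hM2⟩ := ((htt.eventually_gt_atTop u).and (eventually_gt_atTop 0)).exists
    have := hTlt (fun _ => -1) (-M) (fun _ => by show (-1:ℝ) < 0; norm_num) (by linarith)
    linarith
  have hc1zero : c1 0 = 0 := by simp [hc1def]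
  have hμinact : ∀ j, g j xhat ≠ 0 → μ j = 0 := by
    intro j hj
    by_contra hne
    have hjpos : 0 < μ j := lt_of_le_of_ne (hμnn j) (Ne.symm hne)
    have hs : ∀ M : ℝ, u ≤ -M * μ j := by
      intro M
      have hmem : (((fun i => if i = j then -M else 0) : Fin m → ℝ), (0:ℝ)) ∈ S := by
        refine ⟨0, fun i hi => ?_, by rw [hc1zero]⟩
        have hij : i ≠ j := fun h => hj (h ▸ hi)
        simp [inner_zero_right, hij]
      have := hφS _ hmem
      rw [hexp] at this
      have hsum0 : (∑ i, (if i = j then -M else 0) * μ i) = -M * μ j := by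
        rw [Finset.sum_eq_single j]
        · rw [if_pos rfl]
        · intro i _ hij
          rw [if_neg hij, zero_mul]
        · intro h; exact absurd (Finset.mem_univ j) h
      rw [hsum0, zero_mul, add_zero] at this
      exact this
    have h1 := hs ((|u| + 1) / μ j)
    rw [neg_mul, div_mul_cancel₀ _ (ne_of_gt hjpos)] at h1
    have := neg_abs_le u
    linarith
  have hμ0pos : 0 < μ0 := by
    rcases lt_or_eq_of_le hμ0nn with h | h
    · exact h
    exfalso
    have hcle : ∀ t : ℝ, 0 < t → u ≤ t * (∑ i, ⟪g' i xhat, d0⟫ * μ i) := by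
      intro t ht
      have := hstar (t • d0)
      rw [← h, mul_zero, add_zero] at this
      calc u ≤ ∑ i, ⟪g' i xhat, t • d0⟫ * μ i := this
        _ = t * ∑ i, ⟪g' i xhat, d0⟫ * μ i := by
            rw [Finset.mul_sum]
            apply Finset.sum_congr rfl
            intro i _
            rw [real_inner_smul_right]
            ring
    set c := ∑ i, ⟪g' i xhat, d0⟫ * μ i with hcdef
    have hterm : ∀ i, ⟪g' i xhat, d0⟫ * μ i ≤ 0 := by
      intro i
      by_cases hi : g i xhat = 0
      · exact mul_nonpos_of_nonpos_of_nonneg (hd0 i hi).le (hμnn i)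
      · rw [hμinact i hi, mul_zero]
    have hcle0 : c ≤ 0 := Finset.sum_nonpos (fun i _ => hterm i)
    have hu_le : u ≤ c := by simpa using hcle 1 one_pos
    have huz : u = 0 := le_antisymm (hu_le.trans hcle0) hu0
    have hcz : c = 0 := le_antisymm hcle0 (huz ▸ hu_le)
    have hex : ∃ j, 0 < μ j := by
      by_contra hno
      push_neg at hno
      have hall : ∀ j, μ j = 0 := fun j => le_antisymm (hno j) (hμnn j)
      have := hTlt (fun _ => -1) (-1) (fun _ => by show (-1:ℝ) < 0; norm_num) (by norm_num)
      simp only [hall, mul_zero, Finset.sum_const_zero, ← h, zero_add, huz] at this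
      linarith
    obtain ⟨j, hj⟩ := hex
    have hjact : g j xhat = 0 := by
      by_contra hja
      rw [hμinact j hja] at hj
      exact lt_irrefl 0 hj
    have hjneg : ⟪g' j xhat, d0⟫ * μ j < 0 := mul_neg_of_neg_of_pos (hd0 j hjact) hj
    have : c < 0 := by
      calc c < ∑ _i : Fin m, (0:ℝ) :=
            Finset.sum_lt_sum (fun i _ => hterm i) ⟨j, Finset.mem_univ j, hjneg⟩
        _ = 0 := by simp
    linarith
  -- assemble multipliers
  set lam : Fin m → ℝ := fun i => μ i / μ0 with hlamdef
  have hlamnn : ∀ i, 0 ≤ lam i := fun i => div_nonneg (hμnn i) hμ0pos.le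
  have hlamcs : ∀ i, lam i * g i xhat = 0 := by
    intro i
    by_cases hi : g i xhat = 0
    · rw [hi, mul_zero]
    · rw [hlamdef]
      simp only
      rw [hμinact i hi, zero_div, zero_mul]
  have hineq : ∀ d : Euc n, 0 ≤ c1 d + ∑ i, lam i * ⟪g' i xhat, d⟫ := by
    intro d
    have hst := (hu0.trans (hstar d))
    have hsum_eq : ∑ i, lam i * ⟪g' i xhat, d⟫ = (∑ i, ⟪g' i xhat, d⟫ * μ i) / μ0 := by
      rw [Finset.sum_div]
      apply Finset.sum_congr rfl
      intro i _
      show μ i / μ0 * ⟪g' i xhat, d⟫ = ⟪g' i xhat, d⟫ * μ i / μ0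
      ring
    rw [hsum_eq]
    have h2 : -c1 d ≤ (∑ i, ⟪g' i xhat, d⟫ * μ i) / μ0 := by
      rw [le_div_iff₀ hμ0pos]
      linarith
    linarith
  refine ⟨hfeas, lam, hlamnn, hlamcs,
    v - f' xhat - ∑ i, lam i • g' i xhat, ?_, v, ?_, ?_⟩
  · intro y
    have h := hineq (y - xhat)
    have he1 : ⟪v - f' xhat - ∑ i, lam i • g' i xhat, y - xhat⟫
        = ⟪v, y - xhat⟫ - ⟪f' xhat, y - xhat⟫ - ∑ i, lam i * ⟪g' i xhat, y - xhat⟫ := by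
      rw [inner_sub_left, inner_sub_left, sum_inner]
      simp_rw [real_inner_smul_left]
    have he2 : ⟪f' xhat - v, y - xhat⟫ = ⟪f' xhat, y - xhat⟫ - ⟪v, y - xhat⟫ :=
      inner_sub_left _ _ _
    simp only [hc1def] at h
    rw [add_sub_cancel] at h
    rw [he1]
    linarith
  · intro y
    exact hv y
  · abel
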